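/- For responses y* ∈ (0,1)^n strictly between 0 and 1 and any n × p matrix X with full column rank p ≤ n, the logistic log-likelihood ℓ(β; y*, X) = Σ_j [y*_j x_j^⊤ β − ζ(x_j^⊤ β)] is strictly concave in β and attains its maximum at a unique β ∈ ℝ^p; i.e., the MDYPL estimate exists and is unique for every data configuration. -/

import Mathlib

noncomputable def zeta (x : ℝ) : ℝ := Real.log (1 + Real.exp x)

noncomputable def loglik {n p : ℕ} (y : Fin n → ℝ) (X : Fin n → Fin p → ℝ)
    (β : Fin p → ℝ) : ℝ :=
  ∑ j, (y j * (∑ i, X j i * β i) - zeta (∑ i, X j i * β i))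

lemma one_add_exp_pos (x : ℝ) : 0 < 1 + Real.exp x := by positivity

lemma zeta_cont : Continuous zeta :=
  (continuous_const.add Real.continuous_exp).log fun x => (one_add_exp_pos x).ne'

lemma zeta_hasDerivAt (x : ℝ) :
    HasDerivAt zeta (Real.exp x / (1 + Real.exp x)) x := by
  have h := ((Real.hasDerivAt_exp x).const_add 1).log (one_add_exp_pos x).ne'
  show HasDerivAt (fun y => Real.log (1 + Real.exp y)) _ x
  simpa using h

lemma sigma_hasDerivAt (x : ℝ) :
    HasDerivAt (fun x => Real.exp x / (1 + Real.exp x))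
      (Real.exp x / (1 + Real.exp x) ^ 2) x := by
  have h := (Real.hasDerivAt_exp x).div ((Real.hasDerivAt_exp x).const_add 1)
      (one_add_exp_pos x).ne'
  refine HasDerivAt.congr_deriv h ?_
  have := (one_add_exp_pos x).ne'
  ring

lemma zeta_strictConvex : StrictConvexOn ℝ Set.univ zeta := by
  apply strictConvexOn_of_deriv2_pos convex_univ zeta_cont.continuousOn
  intro x _
  have h1 : deriv zeta = fun x => Real.exp x / (1 + Real.exp x) :=
    funext fun x => (zeta_hasDerivAt x).deriv
  have h2 : deriv^[2] zeta x = deriv (deriv zeta) x := by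
    simp [Function.iterate_succ, Function.comp]
  rw [h2, h1, (sigma_hasDerivAt x).deriv]
  positivity

lemma zeta_nonneg (t : ℝ) : 0 ≤ zeta t :=
  Real.log_nonneg (by linarith [Real.exp_pos t])

lemma self_le_zeta (t : ℝ) : t ≤ zeta t := by
  have h : Real.exp t ≤ 1 + Real.exp t := by linarith
  have := Real.log_le_log (Real.exp_pos t) h
  simpa [zeta, Real.log_exp] using this

lemma term_bound (yj t : ℝ) (h0 : 0 < yj) (h1 : yj < 1) :
    yj * t - zeta t ≤ -(min yj (1 - yj)) * |t| := by
  rcases le_total 0 t with h | h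
  · rw [abs_of_nonneg h]
    have := self_le_zeta t
    nlinarith [min_le_right yj (1 - yj)]
  · rw [abs_of_nonpos h]
    have := zeta_nonneg t
    nlinarith [min_le_left yj (1 - yj)]

lemma lin_comb {p : ℕ} (c x y : Fin p → ℝ) (a b : ℝ) :
    ∑ i, c i * (a * x i + b * y i) = a * ∑ i, c i * x i + b * ∑ i, c i * y i := by
  rw [Finset.mul_sum, Finset.mul_sum, ← Finset.sum_add_distrib]
  exact Finset.sum_congr rfl fun i _ => by ring

lemma mulVecLin_apply_eq {n p : ℕ} (X : Fin n → Fin p → ℝ) (β : Fin p → ℝ) (j : Fin n) :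
    Matrix.mulVecLin X β j = ∑ i, X j i * β i := by
  rfl

lemma loglik_cont {n p : ℕ} (ystar : Fin n → ℝ) (X : Fin n → Fin p → ℝ) :
    Continuous (loglik ystar X) := by
  apply continuous_finset_sum
  intro j _
  have hLj : Continuous fun β : Fin p → ℝ => ∑ i, X j i * β i :=
    continuous_finset_sum _ fun i _ => continuous_const.mul (continuous_apply i)
  exact (continuous_const.mul hLj).sub (zeta_cont.comp hLj)

lemma aux_concave {n p : ℕ} (ystar : Fin n → ℝ)
    (hy : ∀ j, ystar j ∈ Set.Ioo (0 : ℝ) 1) (X : Fin n → Fin p → ℝ)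
    (hX : Function.Injective fun β : Fin p → ℝ => fun j => ∑ i, X j i * β i) :
    StrictConcaveOn ℝ Set.univ (loglik ystar X) := by
  refine ⟨convex_univ, ?_⟩
  intro x _ y _ hxy a b ha hb hab
  obtain ⟨j0, hj0⟩ : ∃ j, (∑ i, X j i * x i) ≠ (∑ i, X j i * y i) := by
    by_contra h
    push_neg at h
    exact hxy (hX (funext h))
  simp only [smul_eq_mul, loglik]
  rw [Finset.mul_sum, Finset.mul_sum, ← Finset.sum_add_distrib]
  apply Finset.sum_lt_sum
  · intro j _
    have hc := zeta_strictConvex.convexOn.2 (Set.mem_univ (∑ i, X j i * x i))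
      (Set.mem_univ (∑ i, X j i * y i)) ha.le hb.le hab
    simp only [smul_eq_mul] at hc
    have hl : ∑ i, X j i * (a * x i + b * y i)
        = a * ∑ i, X j i * x i + b * ∑ i, X j i * y i := lin_comb _ _ _ _ _
    simp only [Pi.add_apply, Pi.smul_apply, smul_eq_mul]
    rw [hl]
    nlinarith [hc]
  · refine ⟨j0, Finset.mem_univ j0, ?_⟩
    have hc := zeta_strictConvex.2 (Set.mem_univ (∑ i, X j0 i * x i))
      (Set.mem_univ (∑ i, X j0 i * y i)) hj0 ha hb hab
    simp only [smul_eq_mul] at hc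
    have hl : ∑ i, X j0 i * (a * x i + b * y i)
        = a * ∑ i, X j0 i * x i + b * ∑ i, X j0 i * y i := lin_comb _ _ _ _ _
    simp only [Pi.add_apply, Pi.smul_apply, smul_eq_mul]
    rw [hl]
    nlinarith [hc]

lemma aux_coercive {n p : ℕ} [Nonempty (Fin n)] (ystar : Fin n → ℝ)
    (hy : ∀ j, ystar j ∈ Set.Ioo (0 : ℝ) 1) (X : Fin n → Fin p → ℝ) :
    ∃ c : ℝ, 0 < c ∧ ∀ β : Fin p → ℝ,
      loglik ystar X β ≤ -c * ‖Matrix.mulVecLin X β‖ := by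
  classical
  set L : (Fin p → ℝ) →ₗ[ℝ] (Fin n → ℝ) := Matrix.mulVecLin X with hLdef
  set c : ℝ := Finset.univ.inf' Finset.univ_nonempty
    (fun j => min (ystar j) (1 - ystar j)) with hcdef
  have hc0 : 0 < c := by
    rw [hcdef, Finset.lt_inf'_iff]
    intro j _
    exact lt_min (hy j).1 (by linarith [(hy j).2])
  have hcle : ∀ j, c ≤ min (ystar j) (1 - ystar j) := fun j =>
    Finset.inf'_le _ (Finset.mem_univ j)
  clear_value c
  refine ⟨c, hc0, fun β => ?_⟩
  obtain ⟨j0, -, hj0⟩ := Finset.exists_mem_eq_sup Finset.univ Finset.univ_nonempty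
    (fun b => ‖L β b‖₊)
  have hnorm : ‖L β‖ = |L β j0| := by
    rw [Pi.norm_def, hj0]; simp [Real.norm_eq_abs]
  have hterm : ∀ j, ystar j * (L β j) - zeta (L β j) ≤ -c * |L β j| := by
    intro j
    have := term_bound (ystar j) (L β j) (hy j).1 (hy j).2
    have h2 : -(min (ystar j) (1 - ystar j)) * |L β j| ≤ -c * |L β j| := by
      have := hcle j
      nlinarith [abs_nonneg (L β j)]
    linarith
  have hnonpos : ∀ j, ystar j * (L β j) - zeta (L β j) ≤ 0 := by
    intro j
    have := hterm j
    nlinarith [abs_nonneg (L β j), hc0]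
  have hsum : loglik ystar X β ≤ ystar j0 * (L β j0) - zeta (L β j0) := by
    have h := Finset.single_le_sum
      (f := fun j => -(ystar j * (L β j) - zeta (L β j)))
      (fun j _ => by simpa using hnonpos j) (Finset.mem_univ j0)
    have hrw : loglik ystar X β
        = ∑ j, (ystar j * (L β j) - zeta (L β j)) := by
      unfold loglik
      exact Finset.sum_congr rfl fun j _ => by rw [hLdef, mulVecLin_apply_eq]
    simp only [Finset.sum_neg_distrib] at h
    rw [hrw]
    linarith
  calc loglik ystar X β ≤ ystar j0 * (L β j0) - zeta (L β j0) := hsum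
    _ ≤ -c * |L β j0| := hterm j0
    _ = -c * ‖L β‖ := by rw [hnorm]

lemma loglik_zero {n p : ℕ} (ystar : Fin n → ℝ) (X : Fin n → Fin p → ℝ) :
    loglik ystar X 0 = -(n * Real.log 2) := by
  simp [loglik, zeta]
  norm_num

lemma aux_exists {n p : ℕ} [Nonempty (Fin n)] (ystar : Fin n → ℝ)
    (hy : ∀ j, ystar j ∈ Set.Ioo (0 : ℝ) 1) (X : Fin n → Fin p → ℝ)
    (hX : Function.Injective fun β : Fin p → ℝ => fun j => ∑ i, X j i * β i) :
    ∃ β : Fin p → ℝ, IsMaxOn (loglik ystar X) Set.univ β := by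
  classical
  set L : (Fin p → ℝ) →ₗ[ℝ] (Fin n → ℝ) := Matrix.mulVecLin X with hLdef
  have hLinj : Function.Injective ⇑L := by
    have hLfun : ⇑L = fun β : Fin p → ℝ => fun j => ∑ i, X j i * β i := by
      funext β j; rw [hLdef]; exact mulVecLin_apply_eq X β j
    rw [hLfun]; exact hX
  obtain ⟨K, hK0, hKlip⟩ := LinearMap.exists_antilipschitzWith L
    (LinearMap.ker_eq_bot.mpr hLinj)
  obtain ⟨c, hc0, hbound⟩ := aux_coercive ystar hy X
  rw [← hLdef] at hbound
  have hKnorm : ∀ β : Fin p → ℝ, ‖β‖ ≤ (K : ℝ) * ‖L β‖ := by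
    intro β
    have := hKlip.le_mul_dist β 0
    simpa [dist_zero_right, map_zero] using this
  have hK0' : (0:ℝ) < K := hK0
  set R : ℝ := (K : ℝ) * (n * Real.log 2) / c with hRdef
  have hlog2 : 0 < Real.log 2 := Real.log_pos (by norm_num)
  have hR0 : 0 ≤ R := by positivity
  have hout : ∀ β : Fin p → ℝ, R < ‖β‖ →
      loglik ystar X β < loglik ystar X 0 := by
    intro β hβ
    have h2 := hKnorm β
    rw [loglik_zero, hRdef] at *
    have h3 : (K:ℝ) * (n * Real.log 2) < c * ‖β‖ := by
      rw [div_lt_iff₀ hc0] at hβ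
      linarith [mul_comm (‖β‖) c]
    have h4 : c * ‖β‖ ≤ c * ((K:ℝ) * ‖L β‖) :=
      mul_le_mul_of_nonneg_left h2 hc0.le
    have h5 : (K:ℝ) * (n * Real.log 2) < c * ((K:ℝ) * ‖L β‖) := lt_of_lt_of_le h3 h4
    rw [show c * ((K:ℝ) * ‖L β‖) = (K:ℝ) * (c * ‖L β‖) by ring] at h5
    have h6 : n * Real.log 2 < c * ‖L β‖ := (mul_lt_mul_iff_right₀ hK0').mp h5
    have h7 : -c * ‖L β‖ < -((n : ℝ) * Real.log 2) := by linarith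
    exact lt_of_le_of_lt (hbound β) h7
  obtain ⟨βs, hβsmem, hβsmax⟩ := (isCompact_closedBall (0 : Fin p → ℝ) R).exists_isMaxOn
    ⟨0, Metric.mem_closedBall_self hR0⟩ (loglik_cont ystar X).continuousOn
  have h0mem : (0 : Fin p → ℝ) ∈ Metric.closedBall (0 : Fin p → ℝ) R :=
    Metric.mem_closedBall_self hR0
  refine ⟨βs, fun β _ => ?_⟩
  by_cases hβ : β ∈ Metric.closedBall (0 : Fin p → ℝ) R
  · exact hβsmax hβ
  · have hβ' : R < ‖β‖ := by
      rw [Metric.mem_closedBall, dist_zero_right, not_le] at hβ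
      exact hβ
    have h1 := hout β hβ'
    have h0 : loglik ystar X 0 ≤ loglik ystar X βs := hβsmax h0mem
    simp only [Set.mem_setOf_eq]
    linarith

theorem stmt_5 {n p : ℕ} (hpn : p ≤ n) (ystar : Fin n → ℝ)
    (hy : ∀ j, ystar j ∈ Set.Ioo (0 : ℝ) 1) (X : Fin n → Fin p → ℝ)
    (hX : Function.Injective fun β : Fin p → ℝ => fun j => ∑ i, X j i * β i) :
    StrictConcaveOn ℝ Set.univ (loglik ystar X) ∧
    ∃! β : Fin p → ℝ, IsMaxOn (loglik ystar X) Set.univ β := by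
  have hconc := aux_concave ystar hy X hX
  refine ⟨hconc, ?_⟩
  have huniq : ∀ β₁ β₂ : Fin p → ℝ, IsMaxOn (loglik ystar X) Set.univ β₁ →
      IsMaxOn (loglik ystar X) Set.univ β₂ → β₁ = β₂ := by
    intro β₁ β₂ h₁ h₂
    by_contra hne
    have heq : loglik ystar X β₁ = loglik ystar X β₂ :=
      le_antisymm (h₂ (Set.mem_univ β₁)) (h₁ (Set.mem_univ β₂))
    have hs := hconc.2 (Set.mem_univ β₁) (Set.mem_univ β₂) hne
      (by norm_num : (0:ℝ) < 1/2) (by norm_num : (0:ℝ) < 1/2) (by norm_num)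
    have hm : loglik ystar X ((1/2 : ℝ) • β₁ + (1/2 : ℝ) • β₂) ≤ loglik ystar X β₁ :=
      h₁ (Set.mem_univ _)
    simp only [smul_eq_mul] at hs
    rw [heq] at hs
    rw [heq] at hm
    linarith
  rcases Nat.eq_zero_or_pos n with hn | hn
  · subst hn
    have hp : p = 0 := Nat.le_zero.mp hpn
    subst hp
    refine ⟨0, ?_, fun β hβ => huniq β 0 hβ ?_⟩ <;>
      · intro β _
        simp [loglik]
  · haveI : Nonempty (Fin n) := ⟨⟨0, hn⟩⟩
    obtain ⟨βs, hβs⟩ := aux_exists ystar hy X hX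
    exact ⟨βs, hβs, fun β hβ => huniq β βs hβ hβs⟩
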